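/- Let k ∈ ℤ and let f : ℍ → ℂ be holomorphic, with iterated Shimura–Maass derivatives ∂^n f (base weight k). Then for every n ≥ 0 and every z ∈ ℍ, the normalized ordinary derivative is recovered by f^{(n)}(z)/(2πi)^n = Σ_{r=0}^{n} (−1)^{n−r} · C(n,r) · (k+r)_{n−r} / (−4π·Im z)^{n−r} · (∂^r f)(z). -/

import Mathlib

open Complex

/-- The Wirtinger derivative `∂_z = (1/2)(∂/∂x − i ∂/∂y)` of `f : ℂ → ℂ` at `z`. -/
noncomputable def wirtingerDeriv (f : ℂ → ℂ) (z : ℂ) : ℂ :=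
  (1 / 2) * (fderiv ℝ f z 1 - Complex.I * fderiv ℝ f z Complex.I)

/-- The iterated Shimura–Maass derivative `∂^n f` of base weight `k`. -/
noncomputable def smIter (k : ℤ) (f : ℂ → ℂ) : ℕ → ℂ → ℂ
  | 0 => f
  | n + 1 => fun z => (1 / (2 * (Real.pi : ℂ) * Complex.I)) *
      (wirtingerDeriv (smIter k f n) z +
        ((k : ℂ) + 2 * n) * smIter k f n z / (z - (starRingEnd ℂ) z))

/-! ### Wirtinger derivative toolbox -/

lemma SM.wd_congr {f g : ℂ → ℂ} {z : ℂ} (h : f =ᶠ[nhds z] g) :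
    wirtingerDeriv f z = wirtingerDeriv g z := by
  unfold wirtingerDeriv; rw [h.fderiv_eq]

lemma SM.wd_holo {g : ℂ → ℂ} {z : ℂ} (h : DifferentiableAt ℂ g z) :
    wirtingerDeriv g z = deriv g z := by
  unfold wirtingerDeriv
  rw [h.fderiv_restrictScalars ℝ]
  have h1 : (fderiv ℂ g z) 1 = deriv g z := by simp [fderiv_apply_one_eq_deriv]
  have hI : (fderiv ℂ g z) Complex.I = Complex.I * deriv g z := by
    have := (fderiv ℂ g z).map_smul Complex.I (1 : ℂ)
    simp only [smul_eq_mul, mul_one] at this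
    rw [this, h1]
  simp only [ContinuousLinearMap.coe_restrictScalars', h1, hI]
  ring_nf
  rw [Complex.I_sq]
  ring

lemma SM.wd_mul {f g : ℂ → ℂ} {z : ℂ} (hf : DifferentiableAt ℝ f z)
    (hg : DifferentiableAt ℝ g z) :
    wirtingerDeriv (fun w => f w * g w) z
      = wirtingerDeriv f z * g z + f z * wirtingerDeriv g z := by
  unfold wirtingerDeriv
  rw [fderiv_fun_mul hf hg]
  simp only [ContinuousLinearMap.add_apply, ContinuousLinearMap.coe_smul', Pi.smul_apply,
    smul_eq_mul]
  ring

lemma SM.wd_const_mul (c : ℂ) {g : ℂ → ℂ} {z : ℂ} (hg : DifferentiableAt ℝ g z) :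
    wirtingerDeriv (fun w => c * g w) z = c * wirtingerDeriv g z := by
  unfold wirtingerDeriv
  rw [fderiv_const_mul hg c]
  simp only [ContinuousLinearMap.coe_smul', Pi.smul_apply, smul_eq_mul]
  ring

lemma SM.wd_sum {s : Finset ℕ} {F : ℕ → ℂ → ℂ} {z : ℂ}
    (h : ∀ r ∈ s, DifferentiableAt ℝ (F r) z) :
    wirtingerDeriv (fun w => ∑ r ∈ s, F r w) z = ∑ r ∈ s, wirtingerDeriv (F r) z := by
  unfold wirtingerDeriv
  rw [fderiv_fun_sum h]
  simp only [ContinuousLinearMap.coe_sum', Finset.sum_apply]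
  rw [Finset.mul_sum, ← Finset.sum_sub_distrib, Finset.mul_sum]

/-- `z ↦ z - conj z` as an ℝ-linear continuous map. -/
noncomputable def SM.wLM : ℂ →L[ℝ] ℂ :=
  ContinuousLinearMap.id ℝ ℂ - Complex.conjCLE.toContinuousLinearMap

lemma SM.wLM_apply (v : ℂ) : SM.wLM v = v - (starRingEnd ℂ) v := rfl

lemma SM.hasFDerivAt_w (z : ℂ) :
    HasFDerivAt (fun w : ℂ => w - (starRingEnd ℂ) w) SM.wLM z :=
  SM.wLM.hasFDerivAt

lemma SM.comp_w_hasFDeriv {g : ℂ → ℂ} (z : ℂ)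
    (hg : DifferentiableAt ℂ g (z - (starRingEnd ℂ) z)) :
    HasFDerivAt (fun w : ℂ => g (w - (starRingEnd ℂ) w))
      ((ContinuousLinearMap.restrictScalars ℝ
        ((1 : ℂ →L[ℂ] ℂ).smulRight (deriv g (z - (starRingEnd ℂ) z)))).comp SM.wLM) z :=
  ((hg.hasDerivAt.hasFDerivAt).restrictScalars ℝ).comp z (SM.hasFDerivAt_w z)

lemma SM.comp_w_diff {g : ℂ → ℂ} (z : ℂ)
    (hg : DifferentiableAt ℂ g (z - (starRingEnd ℂ) z)) :
    DifferentiableAt ℝ (fun w : ℂ => g (w - (starRingEnd ℂ) w)) z :=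
  (SM.comp_w_hasFDeriv z hg).differentiableAt

lemma SM.comp_w_wd {g : ℂ → ℂ} (z : ℂ)
    (hg : DifferentiableAt ℂ g (z - (starRingEnd ℂ) z)) :
    wirtingerDeriv (fun w : ℂ => g (w - (starRingEnd ℂ) w)) z
      = deriv g (z - (starRingEnd ℂ) z) := by
  unfold wirtingerDeriv
  rw [(SM.comp_w_hasFDeriv z hg).fderiv]
  simp only [ContinuousLinearMap.coe_comp', Function.comp_apply,
    ContinuousLinearMap.coe_restrictScalars', ContinuousLinearMap.smulRight_apply,
    ContinuousLinearMap.one_apply, smul_eq_mul, SM.wLM_apply]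
  rw [Complex.conj_I]
  simp only [map_one]
  ring_nf
  rw [Complex.I_sq]
  ring

lemma SM.w_ne {z : ℂ} (hz : 0 < z.im) : z - (starRingEnd ℂ) z ≠ 0 := by
  rw [Complex.sub_conj, mul_ne_zero_iff]
  refine ⟨?_, Complex.I_ne_zero⟩
  simp only [ne_eq, Complex.ofReal_eq_zero]
  positivity

lemma SM.zpow_w_diff (e : ℤ) {z : ℂ} (hz : 0 < z.im) :
    DifferentiableAt ℝ (fun w : ℂ => (w - (starRingEnd ℂ) w) ^ e) z :=
  SM.comp_w_diff z (differentiableAt_zpow.2 (Or.inl (SM.w_ne hz)))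

lemma SM.zpow_w_wd (e : ℤ) {z : ℂ} (hz : 0 < z.im) :
    wirtingerDeriv (fun w : ℂ => (w - (starRingEnd ℂ) w) ^ e) z
      = e * (z - (starRingEnd ℂ) z) ^ (e - 1) := by
  rw [SM.comp_w_wd z (differentiableAt_zpow.2 (Or.inl (SM.w_ne hz)))]
  rw [deriv_zpow]

lemma SM.term_diff (a : ℂ) (e : ℤ) {h : ℂ → ℂ} {z : ℂ} (hz : 0 < z.im)
    (hh : DifferentiableAt ℝ h z) :
    DifferentiableAt ℝ (fun w : ℂ => a * (w - (starRingEnd ℂ) w) ^ e * h w) z :=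
  (((SM.zpow_w_diff e hz).const_mul a).mul hh)

lemma SM.term_wd (a : ℂ) (e : ℤ) {h : ℂ → ℂ} {z : ℂ} (hz : 0 < z.im)
    (hh : DifferentiableAt ℝ h z) :
    wirtingerDeriv (fun w : ℂ => a * (w - (starRingEnd ℂ) w) ^ e * h w) z
      = a * (e * (z - (starRingEnd ℂ) z) ^ (e - 1)) * h z
        + a * (z - (starRingEnd ℂ) z) ^ e * wirtingerDeriv h z := by
  have h1 := SM.wd_mul (f := fun w : ℂ => a * (w - (starRingEnd ℂ) w) ^ e) (g := h)
    ((SM.zpow_w_diff e hz).const_mul a) hh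
  rw [h1, SM.wd_const_mul a (SM.zpow_w_diff e hz), SM.zpow_w_wd e hz]

/-! ### Coefficient identities -/

lemma SM.coeff_zero (x : ℂ) (n : ℕ) :
    (((n+1).choose 0 : ℕ) : ℂ) * (ascPochhammer ℂ (n+1)).eval x
      = (x + n) * ((n.choose 0 : ℕ) : ℂ) * (ascPochhammer ℂ n).eval x := by
  simp [ascPochhammer_succ_right, Polynomial.eval_mul]
  ring

lemma SM.coeff_succ (x : ℂ) (n t : ℕ) (ht : t ≤ n) :
    (((n+1).choose (t+1) : ℕ) : ℂ) * (ascPochhammer ℂ (n - t)).eval (x + t + 1)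
      = (x + n + t + 1) * ((n.choose (t+1) : ℕ) : ℂ)
          * (ascPochhammer ℂ (n - t - 1)).eval (x + t + 1)
        + ((n.choose t : ℕ) : ℂ) * (ascPochhammer ℂ (n - t)).eval (x + t) := by
  rcases eq_or_lt_of_le ht with rfl | hlt
  · simp [Nat.choose_succ_self]
  · have hm : n - t = (n - t - 1) + 1 := by omega
    set m := n - t - 1 with hmdef
    have pascal : (((n+1).choose (t+1) : ℕ) : ℂ)
        = ((n.choose t : ℕ) : ℂ) + ((n.choose (t+1) : ℕ) : ℂ) := by
      exact_mod_cast congrArg (Nat.cast : ℕ → ℂ) (Nat.choose_succ_succ n t)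
    have h2 : ((t : ℂ) + 1) * ((n.choose (t+1) : ℕ) : ℂ)
        = ((n : ℂ) - t) * ((n.choose t : ℕ) : ℂ) := by
      have h3 : ((n.choose (t+1) * (t+1) : ℕ) : ℂ) = ((n.choose t * (n - t) : ℕ) : ℂ) :=
        congrArg (Nat.cast : ℕ → ℂ) (Nat.choose_succ_right_eq n t)
      push_cast [Nat.cast_sub ht] at h3
      linear_combination h3
    rw [hm]
    have hsr : (ascPochhammer ℂ (m+1)).eval (x + t + 1)
        = (ascPochhammer ℂ m).eval (x + t + 1) * (x + t + 1 + m) := by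
      simp [ascPochhammer_succ_right, Polynomial.eval_mul]
    have hsl : (ascPochhammer ℂ (m+1)).eval (x + t)
        = (x + t) * (ascPochhammer ℂ m).eval (x + t + 1) := by
      simp [ascPochhammer_succ_left, Polynomial.eval_mul, Polynomial.eval_comp]
    rw [hsr, hsl]
    have hnm : (n : ℂ) = (m : ℂ) + t + 1 := by
      have : n = m + t + 1 := by omega
      exact_mod_cast congrArg (Nat.cast : ℕ → ℂ) this
    linear_combination ((x + n) * pascal - h2) * (ascPochhammer ℂ m).eval (x + t + 1)
      - ((((n+1).choose (t+1) : ℕ) : ℂ) * (ascPochhammer ℂ m).eval (x + t + 1)) * hnm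

/-! ### Holomorphy of iterated derivatives -/

lemma SM.iteratedDeriv_diff (f : ℂ → ℂ)
    (hf : ∀ z : ℂ, 0 < z.im → DifferentiableAt ℂ f z) (r : ℕ) {z : ℂ} (hz : 0 < z.im) :
    DifferentiableAt ℂ (iteratedDeriv r f) z := by
  have hU : IsOpen {w : ℂ | 0 < w.im} := isOpen_lt continuous_const Complex.continuous_im
  have hA : AnalyticOnNhd ℂ f {w : ℂ | 0 < w.im} :=
    DifferentiableOn.analyticOnNhd (fun w hw => (hf w hw).differentiableWithinAt) hU
  have key : ∀ r : ℕ, AnalyticOnNhd ℂ (iteratedDeriv r f) {w : ℂ | 0 < w.im} := by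
    intro r
    induction r with
    | zero => simpa using hA
    | succ m ih => rw [iteratedDeriv_succ]; exact ih.deriv
  exact ((key r) z hz).differentiableAt
lemma SM.smIter_eq_sum (k : ℤ) (f : ℂ → ℂ)
    (hf : ∀ z : ℂ, 0 < z.im → DifferentiableAt ℂ f z) (n : ℕ) :
    ∀ z : ℂ, 0 < z.im →
      (2 * (Real.pi : ℂ) * Complex.I) ^ n * smIter k f n z
        = ∑ r ∈ Finset.range (n + 1),
            ((n.choose r : ℕ) : ℂ) * (ascPochhammer ℂ (n - r)).eval ((k : ℂ) + r)
              * (z - (starRingEnd ℂ) z) ^ ((r : ℤ) - (n : ℤ)) * iteratedDeriv r f z := by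
  induction n with
  | zero =>
    intro z hz
    simp [smIter]
  | succ n IH =>
    intro z hz
    have hU : IsOpen {w : ℂ | 0 < w.im} := isOpen_lt continuous_const Complex.continuous_im
    set π2 : ℂ := 2 * (Real.pi : ℂ) * Complex.I with hπ2
    have hπ : π2 ≠ 0 := by
      simp [hπ2, Complex.ofReal_ne_zero, Real.pi_ne_zero, Complex.I_ne_zero]
    have hπn : π2 ^ n ≠ 0 := pow_ne_zero n hπ
    set x : ℂ := (k : ℂ) with hx
    set a : ℕ → ℂ :=
      fun r => ((n.choose r : ℕ) : ℂ) * (ascPochhammer ℂ (n - r)).eval (x + r) with ha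
    set S : ℂ → ℂ := fun w => ∑ r ∈ Finset.range (n + 1),
      a r * (w - (starRingEnd ℂ) w) ^ ((r : ℤ) - (n : ℤ)) * iteratedDeriv r f w with hS
    have hdiffS : ∀ w : ℂ, 0 < w.im → DifferentiableAt ℝ S w := by
      intro w hw
      apply DifferentiableAt.fun_sum
      intro r _
      exact SM.term_diff (a r) _ hw ((SM.iteratedDeriv_diff f hf r hw).restrictScalars ℝ)
    have hev : smIter k f n =ᶠ[nhds z] fun w => (π2 ^ n)⁻¹ * S w := by
      filter_upwards [hU.mem_nhds hz] with w hw
      have h := IH w hw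
      field_simp
      linear_combination h
    have hwdsm : wirtingerDeriv (smIter k f n) z = (π2 ^ n)⁻¹ * wirtingerDeriv S z := by
      rw [SM.wd_congr hev, SM.wd_const_mul _ (hdiffS z hz)]
    set wz : ℂ := z - (starRingEnd ℂ) z with hwz
    have hw0 : wz ≠ 0 := SM.w_ne hz
    have hwdS : wirtingerDeriv S z
        = ∑ r ∈ Finset.range (n + 1),
            (a r * ((((r : ℤ) - (n : ℤ)) : ℂ) * wz ^ ((r : ℤ) - (n : ℤ) - 1))
                * iteratedDeriv r f z
              + a r * wz ^ ((r : ℤ) - (n : ℤ)) * iteratedDeriv (r + 1) f z) := by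
      rw [hS]
      rw [SM.wd_sum (fun r _ => SM.term_diff (a r) _ hz
        ((SM.iteratedDeriv_diff f hf r hz).restrictScalars ℝ))]
      refine Finset.sum_congr rfl fun r _ => ?_
      rw [SM.term_wd (a r) _ hz ((SM.iteratedDeriv_diff f hf r hz).restrictScalars ℝ),
        SM.wd_holo (SM.iteratedDeriv_diff f hf r hz), ← iteratedDeriv_succ, ← hwz]
      push_cast
      ring
    have hSz : S z = ∑ r ∈ Finset.range (n + 1),
        a r * wz ^ ((r : ℤ) - (n : ℤ)) * iteratedDeriv r f z := by
      simp only [hS]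
      rfl
    have hsm2 : smIter k f n z = (π2 ^ n)⁻¹ * S z := by
      have h := IH z hz
      rw [← hwz] at h
      rw [hSz]
      field_simp
      linear_combination h
    have hLHS : π2 ^ (n + 1) * smIter k f (n + 1) z
        = wirtingerDeriv S z + (x + 2 * n) * S z * wz⁻¹ := by
      have hsm : smIter k f (n + 1) z = (1 / π2) *
          (wirtingerDeriv (smIter k f n) z + (x + 2 * n) * smIter k f n z / wz) := rfl
      rw [hsm, hwdsm, hsm2]
      field_simp
      ring
    have hstep : wirtingerDeriv S z + (x + 2 * n) * S z * wz⁻¹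
        = ∑ r ∈ Finset.range (n + 1),
            ((x + n + r) * a r * wz ^ ((r : ℤ) - (n : ℤ) - 1) * iteratedDeriv r f z
              + a r * wz ^ ((r : ℤ) - (n : ℤ)) * iteratedDeriv (r + 1) f z) := by
      rw [hwdS, hSz, Finset.mul_sum, Finset.sum_mul, ← Finset.sum_add_distrib]
      refine Finset.sum_congr rfl fun r _ => ?_
      have hzp : wz ^ ((r : ℤ) - (n : ℤ)) * wz⁻¹ = wz ^ ((r : ℤ) - (n : ℤ) - 1) := by
        rw [← zpow_sub_one₀ hw0]
      push_cast
      linear_combination ((x + 2 * n) * a r * iteratedDeriv r f z) * hzp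
    rw [hLHS, hstep]
    have hA : ∀ s ∈ Finset.range (n + 1 + 1),
        (((n + 1).choose s : ℕ) : ℂ) * (ascPochhammer ℂ (n + 1 - s)).eval (x + s)
            * wz ^ ((s : ℤ) - ((n + 1 : ℕ) : ℤ)) * iteratedDeriv s f z
          = (x + n + s) * ((n.choose s : ℕ) : ℂ) * (ascPochhammer ℂ (n - s)).eval (x + s)
              * wz ^ ((s : ℤ) - (n : ℤ) - 1) * iteratedDeriv s f z
            + (if s = 0 then 0 else
                ((n.choose (s - 1) : ℕ) : ℂ)
                  * (ascPochhammer ℂ (n + 1 - s)).eval (x + ((s - 1 : ℕ) : ℂ))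
                  * wz ^ ((s : ℤ) - (n : ℤ) - 1) * iteratedDeriv s f z) := by
      intro s hs
      have hexp : (s : ℤ) - ((n + 1 : ℕ) : ℤ) = (s : ℤ) - (n : ℤ) - 1 := by push_cast; ring
      rw [hexp]
      match s with
      | 0 =>
        simp only [reduceIte, Nat.sub_zero, Nat.cast_zero, add_zero]
        have h0 := SM.coeff_zero x n
        linear_combination (wz ^ ((0 : ℤ) - (n : ℤ) - 1) * iteratedDeriv 0 f z) * h0
      | (t + 1) =>
        have ht : t ≤ n := by
          have := Finset.mem_range.1 hs; omega
        simp only [Nat.add_sub_cancel, if_neg (Nat.succ_ne_zero t), Nat.succ_sub_succ,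
          Nat.sub_zero]
        have hc := SM.coeff_succ x n t ht
        have e2 : n - (t + 1) = n - t - 1 := by omega
        rw [e2]
        push_cast [Nat.sub_zero]
        rw [show x + ((t : ℂ) + 1) = x + (t : ℂ) + 1 from by ring]
        linear_combination (wz ^ (((t : ℤ) + 1) - (n : ℤ) - 1) * iteratedDeriv (t + 1) f z) * hc
    refine Eq.trans ?_ (Finset.sum_congr rfl hA).symm
    rw [Finset.sum_add_distrib, Finset.sum_add_distrib]
    congr 1
    · symm
      rw [Finset.sum_range_succ]
      simp only [Nat.choose_succ_self, Nat.cast_zero, zero_mul, mul_zero, add_zero]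
      refine Finset.sum_congr rfl fun s _ => ?_
      simp only [ha]
      ring
    · symm
      rw [Finset.sum_range_succ']
      simp only [Nat.succ_ne_zero, ite_false, ite_true, if_pos rfl, add_zero,
        Nat.add_sub_cancel, Nat.succ_sub_succ]
      refine Finset.sum_congr rfl fun r _ => ?_
      have he : ((r + 1 : ℕ) : ℤ) - (n : ℤ) - 1 = (r : ℤ) - (n : ℤ) := by push_cast; ring
      rw [he]
      simp only [ha, Nat.sub_zero]

lemma SM.smIter_diffR (k : ℤ) (f : ℂ → ℂ)
    (hf : ∀ z : ℂ, 0 < z.im → DifferentiableAt ℂ f z) (n : ℕ) {z : ℂ} (hz : 0 < z.im) :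
    DifferentiableAt ℝ (smIter k f n) z := by
  have hU : IsOpen {w : ℂ | 0 < w.im} := isOpen_lt continuous_const Complex.continuous_im
  have hπn : (2 * (Real.pi : ℂ) * Complex.I) ^ n ≠ 0 := by
    apply pow_ne_zero
    simp [Complex.ofReal_ne_zero, Real.pi_ne_zero, Complex.I_ne_zero]
  have hev : smIter k f n =ᶠ[nhds z] fun w =>
      ((2 * (Real.pi : ℂ) * Complex.I) ^ n)⁻¹ *
        ∑ r ∈ Finset.range (n + 1),
          ((n.choose r : ℕ) : ℂ) * (ascPochhammer ℂ (n - r)).eval ((k : ℂ) + r)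
            * (w - (starRingEnd ℂ) w) ^ ((r : ℤ) - (n : ℤ)) * iteratedDeriv r f w := by
    filter_upwards [hU.mem_nhds hz] with w hw
    have h := SM.smIter_eq_sum k f hf n w hw
    field_simp
    linear_combination h
  rw [hev.differentiableAt_iff]
  apply DifferentiableAt.const_mul
  apply DifferentiableAt.fun_sum
  intro r _
  exact SM.term_diff _ _ hz ((SM.iteratedDeriv_diff f hf r hz).restrictScalars ℝ)

lemma SM.wd_smIter (k : ℤ) (f : ℂ → ℂ) (n : ℕ) {z : ℂ} (hz : 0 < z.im) :
    wirtingerDeriv (smIter k f n) z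
      = 2 * (Real.pi : ℂ) * Complex.I * smIter k f (n + 1) z
        - ((k : ℂ) + 2 * n) * smIter k f n z / (z - (starRingEnd ℂ) z) := by
  have hπ : (2 * (Real.pi : ℂ) * Complex.I) ≠ 0 := by
    simp [Complex.ofReal_ne_zero, Real.pi_ne_zero, Complex.I_ne_zero]
  have hw0 : z - (starRingEnd ℂ) z ≠ 0 := SM.w_ne hz
  have hdef : smIter k f (n + 1) z = (1 / (2 * (Real.pi : ℂ) * Complex.I)) *
      (wirtingerDeriv (smIter k f n) z
        + ((k : ℂ) + 2 * n) * smIter k f n z / (z - (starRingEnd ℂ) z)) := rfl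
  rw [hdef]
  field_simp
  ring

lemma SM.inverse (k : ℤ) (f : ℂ → ℂ)
    (hf : ∀ z : ℂ, 0 < z.im → DifferentiableAt ℂ f z) (n : ℕ) :
    ∀ z : ℂ, 0 < z.im →
      iteratedDeriv n f z
        = ∑ r ∈ Finset.range (n + 1),
            (-1 : ℂ) ^ (n - r) * ((n.choose r : ℕ) : ℂ)
              * (ascPochhammer ℂ (n - r)).eval ((k : ℂ) + r)
              * (2 * (Real.pi : ℂ) * Complex.I) ^ r
              * (z - (starRingEnd ℂ) z) ^ ((r : ℤ) - (n : ℤ)) * smIter k f r z := by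
  induction n with
  | zero =>
    intro z hz
    simp [smIter]
  | succ n IH =>
    intro z hz
    have hU : IsOpen {w : ℂ | 0 < w.im} := isOpen_lt continuous_const Complex.continuous_im
    set π2 : ℂ := 2 * (Real.pi : ℂ) * Complex.I with hπ2
    set x : ℂ := (k : ℂ) with hx
    set b : ℕ → ℂ := fun r => (-1 : ℂ) ^ (n - r) * ((n.choose r : ℕ) : ℂ)
      * (ascPochhammer ℂ (n - r)).eval (x + r) * π2 ^ r with hb
    set T : ℂ → ℂ := fun w => ∑ r ∈ Finset.range (n + 1),
      b r * (w - (starRingEnd ℂ) w) ^ ((r : ℤ) - (n : ℤ)) * smIter k f r w with hT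
    set wz : ℂ := z - (starRingEnd ℂ) z with hwz
    have hw0 : wz ≠ 0 := SM.w_ne hz
    have hev : iteratedDeriv n f =ᶠ[nhds z] T := by
      filter_upwards [hU.mem_nhds hz] with w hw
      exact IH w hw
    have hD1 : iteratedDeriv (n + 1) f z = wirtingerDeriv (iteratedDeriv n f) z := by
      rw [iteratedDeriv_succ]
      exact (SM.wd_holo (SM.iteratedDeriv_diff f hf n hz)).symm
    have hwdT : wirtingerDeriv T z
        = ∑ r ∈ Finset.range (n + 1),
            (b r * ((((r : ℤ) - (n : ℤ)) : ℂ) * wz ^ ((r : ℤ) - (n : ℤ) - 1)) * smIter k f r z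
              + b r * wz ^ ((r : ℤ) - (n : ℤ)) * wirtingerDeriv (smIter k f r) z) := by
      rw [hT]
      rw [SM.wd_sum (fun r _ => SM.term_diff (b r) _ hz (SM.smIter_diffR k f hf r hz))]
      refine Finset.sum_congr rfl fun r _ => ?_
      rw [SM.term_wd (b r) _ hz (SM.smIter_diffR k f hf r hz), ← hwz]
      push_cast
      ring
    have hstep : iteratedDeriv (n + 1) f z
        = ∑ r ∈ Finset.range (n + 1),
            (-(x + n + r) * b r * wz ^ ((r : ℤ) - (n : ℤ) - 1) * smIter k f r z
              + π2 * b r * wz ^ ((r : ℤ) - (n : ℤ)) * smIter k f (r + 1) z) := by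
      rw [hD1, SM.wd_congr hev, hwdT]
      refine Finset.sum_congr rfl fun r _ => ?_
      rw [SM.wd_smIter k f r hz]
      have hzp : wz ^ ((r : ℤ) - (n : ℤ)) * wz⁻¹ = wz ^ ((r : ℤ) - (n : ℤ) - 1) := by
        rw [← zpow_sub_one₀ hw0]
      have hV : (z - (starRingEnd ℂ) z)⁻¹ = wz⁻¹ := by rw [hwz]
      push_cast
      rw [div_eq_mul_inv, hV]
      linear_combination (-(x + 2 * ((r : ℕ) : ℂ)) * b r * smIter k f r z) * hzp
    rw [hstep]
    have hB : ∀ s ∈ Finset.range (n + 1 + 1),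
        (-1 : ℂ) ^ (n + 1 - s) * (((n + 1).choose s : ℕ) : ℂ)
            * (ascPochhammer ℂ (n + 1 - s)).eval (x + s) * π2 ^ s
            * wz ^ ((s : ℤ) - ((n + 1 : ℕ) : ℤ)) * smIter k f s z
          = -(x + n + s) * ((-1 : ℂ) ^ (n - s) * ((n.choose s : ℕ) : ℂ)
                * (ascPochhammer ℂ (n - s)).eval (x + s) * π2 ^ s)
              * wz ^ ((s : ℤ) - (n : ℤ) - 1) * smIter k f s z
            + (if s = 0 then 0 else
                π2 * ((-1 : ℂ) ^ (n - (s - 1)) * ((n.choose (s - 1) : ℕ) : ℂ)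
                  * (ascPochhammer ℂ (n - (s - 1))).eval (x + ((s - 1 : ℕ) : ℂ)) * π2 ^ (s - 1))
                  * wz ^ ((s : ℤ) - (n : ℤ) - 1) * smIter k f s z) := by
      intro s hs
      have hexp : (s : ℤ) - ((n + 1 : ℕ) : ℤ) = (s : ℤ) - (n : ℤ) - 1 := by push_cast; ring
      rw [hexp]
      match s with
      | 0 =>
        simp only [reduceIte, Nat.sub_zero, Nat.cast_zero, add_zero]
        have h0 := SM.coeff_zero x n
        have hsign : (-1 : ℂ) ^ (n + 1) = -(-1 : ℂ) ^ n := by rw [pow_succ]; ring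
        linear_combination ((-1 : ℂ) ^ (n + 1) * π2 ^ 0 * wz ^ ((0 : ℤ) - (n : ℤ) - 1)
            * smIter k f 0 z) * h0
          + ((x + n) * ((n.choose 0 : ℕ) : ℂ) * (ascPochhammer ℂ n).eval x * π2 ^ 0
            * wz ^ ((0 : ℤ) - (n : ℤ) - 1) * smIter k f 0 z) * hsign
      | (t + 1) =>
        have ht : t ≤ n := by
          have := Finset.mem_range.1 hs; omega
        simp only [Nat.add_sub_cancel, if_neg (Nat.succ_ne_zero t), Nat.succ_sub_succ,
          Nat.sub_zero]
        rcases eq_or_lt_of_le ht with rfl | hlt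
        · have E2 : t - (t + 1) = 0 := by omega
          rw [E2]
          simp only [Nat.sub_self, Nat.choose_self, Nat.choose_succ_self, Nat.cast_one,
            Nat.cast_zero, pow_zero, one_mul, ascPochhammer_zero, Polynomial.eval_one,
            zero_mul, mul_zero, neg_zero, zero_add, mul_one]
          push_cast
          ring
        · have hc := SM.coeff_succ x n t ht
          have e2 : n - (t + 1) = n - t - 1 := by omega
          rw [e2]
          have hsign2 : (-1 : ℂ) ^ (n - t) = -(-1 : ℂ) ^ (n - t - 1) := by
            have h1 : n - t = (n - t - 1) + 1 := by omega
            calc (-1 : ℂ) ^ (n - t) = (-1 : ℂ) ^ ((n - t - 1) + 1) := by rw [← h1]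
              _ = -(-1 : ℂ) ^ (n - t - 1) := by rw [pow_succ]; ring
          push_cast [Nat.sub_zero]
          rw [show x + ((t : ℂ) + 1) = x + (t : ℂ) + 1 from by ring]
          linear_combination ((-1 : ℂ) ^ (n - t) * π2 ^ (t + 1)
              * wz ^ (((t : ℤ) + 1) - (n : ℤ) - 1) * smIter k f (t + 1) z) * hc
            + ((x + n + t + 1) * ((n.choose (t + 1) : ℕ) : ℂ)
              * (ascPochhammer ℂ (n - t - 1)).eval (x + t + 1) * π2 ^ (t + 1)
              * wz ^ (((t : ℤ) + 1) - (n : ℤ) - 1) * smIter k f (t + 1) z) * hsign2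
    refine Eq.trans ?_ (Finset.sum_congr rfl hB).symm
    rw [Finset.sum_add_distrib, Finset.sum_add_distrib]
    congr 1
    · symm
      rw [Finset.sum_range_succ]
      simp only [Nat.choose_succ_self, Nat.cast_zero, zero_mul, mul_zero, add_zero]
      rfl
    · symm
      rw [Finset.sum_range_succ']
      simp only [Nat.succ_ne_zero, ite_false, ite_true, if_pos rfl, add_zero,
        Nat.add_sub_cancel, Nat.succ_sub_succ]
      refine Finset.sum_congr rfl fun r _ => ?_
      have he : ((r + 1 : ℕ) : ℤ) - (n : ℤ) - 1 = (r : ℤ) - (n : ℤ) := by push_cast; ring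
      rw [he]
      simp only [hb, Nat.sub_zero]

theorem iteratedDeriv_eq_sum_smIter (k : ℤ) (f : ℂ → ℂ)
    (hf : ∀ z : ℂ, 0 < z.im → DifferentiableAt ℂ f z)
    (n : ℕ) (z : ℂ) (hz : 0 < z.im) :
    iteratedDeriv n f z / (2 * (Real.pi : ℂ) * Complex.I) ^ n =
      ∑ r ∈ Finset.range (n + 1),
        (-1) ^ (n - r) * (n.choose r : ℂ) *
          ((ascPochhammer ℂ (n - r)).eval ((k : ℂ) + r) /
            (-4 * (Real.pi : ℂ) * (z.im : ℂ)) ^ (n - r)) *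
          smIter k f r z := by
  have hπ : (2 * (Real.pi : ℂ) * Complex.I) ≠ 0 := by
    simp [Complex.ofReal_ne_zero, Real.pi_ne_zero, Complex.I_ne_zero]
  have hy : (-4 * (Real.pi : ℂ) * (z.im : ℂ)) ≠ 0 := by
    refine mul_ne_zero (mul_ne_zero (by norm_num) ?_) ?_
    · exact Complex.ofReal_ne_zero.mpr Real.pi_ne_zero
    · exact Complex.ofReal_ne_zero.mpr (ne_of_gt hz)
  have hw0 : z - (starRingEnd ℂ) z ≠ 0 := SM.w_ne hz
  rw [SM.inverse k f hf n z hz, Finset.sum_div]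
  refine Finset.sum_congr rfl fun r hr => ?_
  have hrn : r ≤ n := by have := Finset.mem_range.1 hr; omega
  have hm : (r : ℤ) - (n : ℤ) = -((n - r : ℕ) : ℤ) := by omega
  rw [hm, zpow_neg, zpow_natCast]
  have hw4 : (2 * (Real.pi : ℂ) * Complex.I) * (z - (starRingEnd ℂ) z)
      = -4 * (Real.pi : ℂ) * (z.im : ℂ) := by
    rw [Complex.sub_conj]
    push_cast
    linear_combination (4 * (Real.pi : ℂ) * (z.im : ℂ)) * Complex.I_sq
  have hkey : (2 * (Real.pi : ℂ) * Complex.I) ^ (n - r) * (z - (starRingEnd ℂ) z) ^ (n - r)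
      = (-4 * (Real.pi : ℂ) * (z.im : ℂ)) ^ (n - r) := by
    rw [← mul_pow, hw4]
  have hπsplit : (2 * (Real.pi : ℂ) * Complex.I) ^ n
      = (2 * (Real.pi : ℂ) * Complex.I) ^ r * (2 * (Real.pi : ℂ) * Complex.I) ^ (n - r) := by
    rw [← pow_add]
    congr 1
    omega
  rw [hπsplit, ← hkey]
  have h1 : (2 * (Real.pi : ℂ) * Complex.I) ^ r ≠ 0 := pow_ne_zero r hπ
  have h2 : (2 * (Real.pi : ℂ) * Complex.I) ^ (n - r) ≠ 0 := pow_ne_zero _ hπ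
  have h3 : (z - (starRingEnd ℂ) z) ^ (n - r) ≠ 0 := pow_ne_zero _ hw0
  field_simp
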